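/- Let f : ℕ → ℝ be such that f(0) is a positive integer. If the difference function ∂f, defined by ∂f(n) := f(n+1) − f(n), is a D0L-growth function, then f is also a D0L-growth function. -/

import Mathlib

/-- A function `f : ℕ → ℝ` is a D0L-growth function if there is a D0L-system
`(A, σ, w)` such that `f n` is the length of `σⁿ(w)` for every `n`. -/
def IsD0LGrowth (f : ℕ → ℝ) : Prop :=
  ∃ (A : Type) (_ : Fintype A) (σ : FreeMonoid A →* FreeMonoid A) (w : FreeMonoid A),
    ∀ n : ℕ, f n = ((⇑σ)^[n] w).length

section Aux

variable {A : Type} (σ : FreeMonoid A →* FreeMonoid A) (w : FreeMonoid A)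

/-- Auxiliary morphism over the extended alphabet. -/
def auxMap : FreeMonoid (A ⊕ Bool) →* FreeMonoid (A ⊕ Bool) :=
  FreeMonoid.lift fun x => match x with
    | .inl a => (FreeMonoid.map Sum.inl) (σ (FreeMonoid.of a))
    | .inr true => FreeMonoid.of (Sum.inr true) * (FreeMonoid.map Sum.inl) w
    | .inr false => FreeMonoid.of (Sum.inr false)

lemma auxMap_inl (u : FreeMonoid A) :
    auxMap σ w ((FreeMonoid.map Sum.inl) u) = (FreeMonoid.map Sum.inl) (σ u) := by
  have : (auxMap σ w).comp (FreeMonoid.map Sum.inl)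
      = (FreeMonoid.map (Sum.inl : A → A ⊕ Bool)).comp σ := by
    apply FreeMonoid.hom_eq
    intro a
    simp [auxMap, FreeMonoid.map_of, FreeMonoid.lift_eval_of]
  exact DFunLike.congr_fun this u

lemma auxMap_iter_inl (n : ℕ) (u : FreeMonoid A) :
    (⇑(auxMap σ w))^[n] ((FreeMonoid.map Sum.inl) u)
      = (FreeMonoid.map Sum.inl) ((⇑σ)^[n] u) := by
  induction n generalizing u with
  | zero => rfl
  | succ n ih =>
    rw [Function.iterate_succ_apply, auxMap_inl, ih, Function.iterate_succ_apply]

lemma auxMap_iter_c (n : ℕ) :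
    (⇑(auxMap σ w))^[n] (FreeMonoid.of (Sum.inr false)) = FreeMonoid.of (Sum.inr false) := by
  induction n with
  | zero => rfl
  | succ n ih =>
    rw [Function.iterate_succ_apply]
    have : auxMap σ w (FreeMonoid.of (Sum.inr false)) = FreeMonoid.of (Sum.inr false) := by
      simp [auxMap, FreeMonoid.lift_eval_of]
    rw [this, ih]

lemma length_map (u : FreeMonoid A) :
    ((FreeMonoid.map (Sum.inl : A → A ⊕ Bool)) u).length = u.length := by
  exact List.length_map _

lemma auxMap_iter_b_length (n : ℕ) :
    ((⇑(auxMap σ w))^[n] (FreeMonoid.of (Sum.inr true))).length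
      = 1 + ∑ k ∈ Finset.range n, ((⇑σ)^[k] w).length := by
  induction n with
  | zero => simp [FreeMonoid.length_of]
  | succ n ih =>
    rw [Function.iterate_succ_apply]
    have hb : auxMap σ w (FreeMonoid.of (Sum.inr true))
        = FreeMonoid.of (Sum.inr true) * (FreeMonoid.map Sum.inl) w := by
      simp [auxMap, FreeMonoid.lift_eval_of]
    rw [hb, iterate_map_mul, FreeMonoid.length_mul, ih, auxMap_iter_inl,
      length_map, Finset.sum_range_succ, add_assoc]

lemma length_pow_c (k : ℕ) :
    ((FreeMonoid.of (Sum.inr false : A ⊕ Bool)) ^ k).length = k := by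
  induction k with
  | zero => rfl
  | succ k ih => rw [pow_succ, FreeMonoid.length_mul, ih, FreeMonoid.length_of]

end Aux

theorem stmt_12 (f : ℕ → ℝ) (hf0 : ∃ m : ℕ, 0 < m ∧ f 0 = (m : ℝ))
    (hdf : IsD0LGrowth (fun n : ℕ => f (n + 1) - f n)) :
    IsD0LGrowth f := by
  obtain ⟨m, hm, hf0⟩ := hf0
  obtain ⟨A, hA, σ, w, hw⟩ := hdf
  haveI := hA
  simp only at hw
  refine ⟨A ⊕ Bool, inferInstance, auxMap σ w,
    FreeMonoid.of (Sum.inr true) * (FreeMonoid.of (Sum.inr false)) ^ (m - 1), ?_⟩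
  intro n
  have htel : ∑ k ∈ Finset.range n, (f (k + 1) - f k) = f n - f 0 := Finset.sum_range_sub f n
  have hfn : f n = (m : ℝ) + ∑ k ∈ Finset.range n, (((⇑σ)^[k] w).length : ℝ) := by
    have : f n = f 0 + ∑ k ∈ Finset.range n, (f (k + 1) - f k) := by
      rw [htel]; ring
    rw [this, hf0]
    congr 1
    exact Finset.sum_congr rfl fun k _ => hw k
  have hlen : ((⇑(auxMap σ w))^[n]
      (FreeMonoid.of (Sum.inr true) * (FreeMonoid.of (Sum.inr false)) ^ (m - 1))).length
      = (1 + ∑ k ∈ Finset.range n, ((⇑σ)^[k] w).length) + (m - 1) := by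
    rw [iterate_map_mul, FreeMonoid.length_mul, auxMap_iter_b_length,
      iterate_map_pow, auxMap_iter_c, length_pow_c]
  rw [hfn, hlen]
  push_cast
  have hm1 : (1 : ℝ) + ((m : ℝ) - 1) = m := by ring
  rw [Nat.cast_sub hm]
  push_cast
  ring
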